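/- Let m ≥ 3 be an integer with m ≡ 2 (mod 4). Then there are infinitely many positive integers N that cannot be written as N = p_{m+2}(x₁) + p_{m+2}(x₂) + 2·p_{m+2}(x₃) + 2·p_{m+2}(x₄) with x₁, x₂, x₃, x₄ nonnegative integers. -/

import Mathlib

/-- Polygonal number of order `m+2`: `p_{m+2}(n) = (m·n² − (m−2)·n)/2 = m·n(n−1)/2 + n`. -/
def polygonal (m n : ℕ) : ℕ := m * (n * (n - 1)) / 2 + n

/-- Squares mod 16 sorted by parity: an integer square is `8u+1` (odd case),
`16u`, or `16u+4` (even cases). -/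
lemma sq_form (x : ℤ) : ∃ u, (2 ∣ x ∧ x^2 = 16*u) ∨ (2 ∣ x ∧ x^2 = 16*u + 4)
    ∨ (¬ 2 ∣ x ∧ x^2 = 8*u + 1) := by
  by_cases hx : (2:ℤ) ∣ x
  · obtain ⟨n, rfl⟩ := hx
    by_cases hn : (2:ℤ) ∣ n
    · obtain ⟨p, rfl⟩ := hn
      exact ⟨p^2, Or.inl ⟨⟨2*p, by ring⟩, by ring⟩⟩
    · obtain ⟨m, rfl⟩ : ∃ m, n = 2*m + 1 := ⟨(n-1)/2, by omega⟩
      obtain ⟨c, hc⟩ := Int.even_mul_succ_self m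
      refine ⟨2*c, Or.inr (Or.inl ⟨⟨2*m+1, by ring⟩, ?_⟩)⟩
      linear_combination 16 * hc
  · obtain ⟨m, rfl⟩ : ∃ m, x = 2*m + 1 := ⟨(x-1)/2, by omega⟩
    obtain ⟨c, hc⟩ := Int.even_mul_succ_self m
    refine ⟨c, Or.inr (Or.inr ⟨hx, ?_⟩)⟩
    linear_combination 4 * hc

set_option maxHeartbeats 1000000 in
/-- If `16 ∣ M` and `a² + b² + 2c² + 2d² = M` then `a, b, c, d` are all even. -/
lemma even_step (a b c d M : ℤ) (h16 : (16:ℤ) ∣ M) (h : a^2 + b^2 + 2*c^2 + 2*d^2 = M) :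
    2 ∣ a ∧ 2 ∣ b ∧ 2 ∣ c ∧ 2 ∣ d := by
  subst h
  obtain ⟨ua, hA⟩ := sq_form a
  obtain ⟨ub, hB⟩ := sq_form b
  obtain ⟨uc, hC⟩ := sq_form c
  obtain ⟨ud, hD⟩ := sq_form d
  rcases hA with ⟨hpa, hA⟩ | ⟨hpa, hA⟩ | ⟨hpa, hA⟩ <;>
    rcases hB with ⟨hpb, hB⟩ | ⟨hpb, hB⟩ | ⟨hpb, hB⟩ <;>
    rcases hC with ⟨hpc, hC⟩ | ⟨hpc, hC⟩ | ⟨hpc, hC⟩ <;>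
    rcases hD with ⟨hpd, hD⟩ | ⟨hpd, hD⟩ | ⟨hpd, hD⟩ <;>
    rw [hA, hB, hC, hD] at h16 <;>
    first
      | exact ⟨hpa, hpb, hpc, hpd⟩
      | (exfalso; omega)

set_option maxHeartbeats 1000000 in
/-- The key descent lemma: under suitable hypotheses, `4^e * u0` cannot be written as
`a² + b² + 2c² + 2d²` with each entry of the shape `(k*x - j)/2^w`. -/
lemma aux_no_rep (k j q u0 : ℕ) (hkj : k = 2*j+1) (hj : 1 ≤ j)
    (hqk : q < k) (hkq : k < 2*q) (hu : u0 < 2*k) (t : ℕ) (ht : j + 2 ≤ t)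
    (hq : (k:ℤ) ∣ 2^t * q - 1) :
    ∀ e, ∀ w : ℕ, w + e = t → 1 ≤ e → ∀ a b c d : ℤ,
      (∃ x : ℕ, 2^w * a = k*x - j) → (∃ x : ℕ, 2^w * b = k*x - j) →
      (∃ x : ℕ, 2^w * c = k*x - j) → (∃ x : ℕ, 2^w * d = k*x - j) →
      a^2 + b^2 + 2*c^2 + 2*d^2 = 4^e * u0 → False := by
  have hkj' : (k:ℤ) = 2*(j:ℤ)+1 := by exact_mod_cast hkj
  intro e
  induction e with
  | zero => intro w hw h1; exact absurd h1 (by norm_num)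
  | succ e ih =>
    intro w hwe _ a b c d ha hb hc hd heq
    by_cases he : e = 0
    · -- base case: a² + b² + 2c² + 2d² = 4*u0, with w + 1 = t
      subst he
      norm_num at heq
      have hwt : w + 1 = t := by omega
      -- every entry is ≥ q
      have key : ∀ α : ℤ, (∃ x : ℕ, 2^w * α = k*x - j) → (q:ℤ) ≤ α := by
        intro α ⟨x, hx⟩
        have hw : j + 1 ≤ w := by omega
        have h2w : (j:ℤ) < 2^w := by
          have h1 : j < 2^j := Nat.lt_two_pow_self
          have h2 : (2:ℕ)^j ≤ 2^w := Nat.pow_le_pow_right (by norm_num) (by omega)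
          exact_mod_cast lt_of_lt_of_le h1 h2
        have hpw : (0:ℤ) < 2^w := pow_pos (by norm_num) w
        have hj' : (0:ℤ) < j := by exact_mod_cast hj
        -- x ≥ 1
        have hx1 : 1 ≤ x := by
          by_contra hcon
          have hx0 : x = 0 := by omega
          subst hx0
          simp only [Nat.cast_zero, mul_zero, zero_sub] at hx
          rcases lt_trichotomy α 0 with h | h | h
          · have hα : α ≤ -1 := by omega
            have : 2^w * α ≤ 2^w * (-1) := by
              exact mul_le_mul_of_nonneg_left hα (le_of_lt hpw)
            nlinarith
          · subst h
            nlinarith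
          · have : 0 < 2^w * α := mul_pos hpw h
            nlinarith
        -- α > 0
        have hxz : (1:ℤ) ≤ (x:ℤ) := by exact_mod_cast hx1
        have hk0 : (0:ℤ) < k := by omega
        have hkx : (k:ℤ) ≤ k*x := le_mul_of_one_le_right (le_of_lt hk0) hxz
        have hαpos : 0 < α := by
          by_contra hcon
          push_neg at hcon
          have : 2^w * α ≤ 0 := mul_nonpos_of_nonneg_of_nonpos (le_of_lt hpw) hcon
          nlinarith
        -- k ∣ 2^t α - 1
        have hts : (2:ℤ)^t = 2^w * 2 := by rw [← hwt, pow_succ]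
        have hdvd1 : (k:ℤ) ∣ 2^t * α - 1 := by
          refine ⟨2*(x:ℤ) - 1, ?_⟩
          rw [hts]
          linear_combination 2 * hx + hkj'
        have hdvd2 : (k:ℤ) ∣ 2^t * (α - q) := by
          have h := dvd_sub hdvd1 hq
          have heq2 : 2^t * α - 1 - (2^t * q - 1) = 2^t * (α - (q:ℤ)) := by ring
          rwa [heq2] at h
        have hcop : IsCoprime ((k:ℤ)) ((2:ℤ)^t) := by
          have hnat : Nat.Coprime k (2^t) :=
            Nat.Coprime.pow_right t ((Nat.prime_two.coprime_iff_not_dvd.mpr (by omega)).symm)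
          have h2 := (Nat.isCoprime_iff_coprime (m := k) (n := 2^t)).mpr hnat
          push_cast at h2
          exact h2
        have hdvd3 : (k:ℤ) ∣ α - q := hcop.dvd_of_dvd_mul_left hdvd2
        -- conclude q ≤ α
        by_contra hlt
        push_neg at hlt
        have hd4 : (k:ℤ) ∣ (q:ℤ) - α := by
          have h5 := (dvd_neg).mpr hdvd3
          have heq4 : -(α - (q:ℤ)) = (q:ℤ) - α := by ring
          rwa [heq4] at h5
        have hle := Int.le_of_dvd (by omega) hd4
        have hqk' : (q:ℤ) < k := by exact_mod_cast hqk
        omega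
      have ha' := key a ha
      have hb' := key b hb
      have hc' := key c hc
      have hd' := key d hd
      have hq2 : (2:ℤ) ≤ q := by exact_mod_cast (by omega : 2 ≤ q)
      have hu' : (u0:ℤ) < 2*k := by exact_mod_cast hu
      have hkq' : (k:ℤ) < 2*q := by exact_mod_cast hkq
      have hq0 : (0:ℤ) ≤ q := by positivity
      have ha2 : (q:ℤ)^2 ≤ a^2 := pow_le_pow_left₀ hq0 ha' 2
      have hb2 : (q:ℤ)^2 ≤ b^2 := pow_le_pow_left₀ hq0 hb' 2
      have hc2 : (q:ℤ)^2 ≤ c^2 := pow_le_pow_left₀ hq0 hc' 2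
      have hd2 : (q:ℤ)^2 ≤ d^2 := pow_le_pow_left₀ hq0 hd' 2
      have h9 : 0 ≤ 9*(q:ℤ)^2 - 24*q + 16 := by
        have hexp : (3*(q:ℤ)-4)^2 = 9*q^2 - 24*q + 16 := by ring
        have := sq_nonneg (3*(q:ℤ)-4)
        linarith
      have hu'' : (u0:ℤ) ≤ 2*k - 1 := by omega
      have hk'' : (k:ℤ) ≤ 2*q - 1 := by omega
      linarith [heq, ha2, hb2, hc2, hd2, h9, hu'', hk'']
    · -- descent step
      obtain ⟨e', rfl⟩ : ∃ e', e = e' + 1 := ⟨e - 1, by omega⟩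
      have h16 : (16:ℤ) ∣ 4^(e'+1+1) * (u0:ℤ) := by
        refine ⟨4^e' * u0, ?_⟩
        rw [show e'+1+1 = e' + 2 from rfl, pow_add]
        ring
      obtain ⟨h2a, h2b, h2c, h2d⟩ := even_step a b c d _ h16 heq
      obtain ⟨a', rfl⟩ := h2a
      obtain ⟨b', rfl⟩ := h2b
      obtain ⟨c', rfl⟩ := h2c
      obtain ⟨d', rfl⟩ := h2d
      have heq' : a'^2 + b'^2 + 2*c'^2 + 2*d'^2 = 4^(e'+1) * u0 := by
        have h4 : (4:ℤ) * (a'^2 + b'^2 + 2*c'^2 + 2*d'^2) = 4 * (4^(e'+1) * u0) := by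
          linear_combination heq
        exact mul_left_cancel₀ (by norm_num) h4
      have wit : ∀ α : ℤ, (∃ x : ℕ, 2^w * (2*α) = k*x - j) →
          (∃ x : ℕ, 2^(w+1) * α = k*x - j) := by
        intro α ⟨x, hx⟩
        exact ⟨x, by rw [pow_succ, mul_assoc]; exact hx⟩
      exact ih (w+1) (by omega) (by omega) a' b' c' d'
        (wit a' ha) (wit b' hb) (wit c' hc) (wit d' hd) heq'

/-- Casting `polygonal (2*(2*j+1)) n` to `ℤ`. -/
lemma poly_cast (j n : ℕ) :
    (polygonal (2*(2*j+1)) n : ℤ) = (2*j+1) * (n:ℤ)^2 - 2*j*n := by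
  have hdiv : (2*(2*j+1)) * (n*(n-1)) / 2 = (2*j+1) * (n*(n-1)) := by
    rw [mul_assoc]
    exact Nat.mul_div_cancel_left _ (by norm_num)
  unfold polygonal
  rw [hdiv]
  cases n with
  | zero => simp
  | succ n' =>
    push_cast [Nat.succ_sub_one]
    ring

theorem infinitely_many_not_sum_polygonal_1122 (m : ℕ) (hm : 3 ≤ m) (hmod : m % 4 = 2) :
    {N : ℕ | 0 < N ∧ ¬ ∃ x₁ x₂ x₃ x₄ : ℕ,
      N = polygonal m x₁ + polygonal m x₂ + 2 * polygonal m x₃ + 2 * polygonal m x₄}.Infinite := by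
  -- extract j with m = 2*(2*j+1), j ≥ 1
  obtain ⟨j, hj1, hmj⟩ : ∃ j, 1 ≤ j ∧ m = 2*(2*j+1) := ⟨(m-2)/4, by omega, by omega⟩
  obtain ⟨k, hk⟩ : ∃ k, k = 2*j + 1 := ⟨_, rfl⟩
  rw [← hk] at hmj
  have hk3 : 3 ≤ k := by omega
  have hk0 : 0 < k := by omega
  -- q = 2^L with k/2 < q < k
  obtain ⟨L, hL⟩ : ∃ L, L = Nat.log 2 k := ⟨_, rfl⟩
  obtain ⟨q, hqdef⟩ : ∃ q, q = 2^L := ⟨_, rfl⟩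
  have hqk : q < k := by
    have h1 : q ≤ k := by rw [hqdef, hL]; exact Nat.pow_log_le_self 2 (by omega)
    have hL1 : 1 ≤ L := by
      rw [hL]
      exact (Nat.le_log_iff_pow_le (by norm_num) (by omega : k ≠ 0)).mpr (by omega : 2^1 ≤ k)
    have h2 : 2 ∣ q := by
      rw [hqdef]
      exact dvd_pow_self 2 (by omega)
    omega
  have hkq : k < 2*q := by
    have h1 : k < 2^(L+1) := by rw [hL]; exact Nat.lt_pow_succ_log_self (by norm_num) k
    have h2 : (2:ℕ)^(L+1) = 2*q := by rw [hqdef, pow_succ]; ring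
    omega
  -- u0: odd, < 2k, ≡ 6j²q² mod k
  obtain ⟨r, hr⟩ : ∃ r, r = (6*j^2*q^2) % k := ⟨_, rfl⟩
  obtain ⟨u0, hu0def⟩ : ∃ u0, u0 = if r % 2 = 1 then r else r + k := ⟨_, rfl⟩
  have hrk : r < k := by rw [hr]; exact Nat.mod_lt _ hk0
  have hu0odd : u0 % 2 = 1 := by
    rw [hu0def]
    split
    · assumption
    · omega
  have hu0lt : u0 < 2*k := by
    rw [hu0def]; split <;> omega
  have hu0pos : 0 < u0 := by omega
  have hu0mod : u0 ≡ 6*j^2*q^2 [MOD k] := by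
    have h1 : r ≡ 6*j^2*q^2 [MOD k] := by rw [hr]; exact Nat.mod_modEq _ _
    have h2 : r + k ≡ r [MOD k] := Nat.add_mod_right r k
    rw [hu0def]
    split
    · exact h1
    · exact h2.trans h1
  -- totient
  obtain ⟨φ, hφdef⟩ : ∃ φ, φ = Nat.totient k := ⟨_, rfl⟩
  have hφ1 : 1 ≤ φ := by rw [hφdef]; exact Nat.totient_pos.mpr hk0
  have hcop2k : Nat.Coprime 2 k := Nat.prime_two.coprime_iff_not_dvd.mpr (by omega)
  have htot : (2:ℕ)^φ ≡ 1 [MOD k] := by rw [hφdef]; exact Nat.ModEq.pow_totient hcop2k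
  -- the exponent t s
  obtain ⟨T, hT⟩ : ∃ T : ℕ → ℕ, ∀ s, T s = (s + L + j + 2) * φ := ⟨_, fun s => rfl⟩
  have hTL : ∀ s, L + (j + 2) ≤ T s := by
    intro s
    rw [hT]
    have h := Nat.le_mul_of_pos_right (s + L + j + 2) hφ1
    omega
  obtain ⟨t, ht⟩ : ∃ t : ℕ → ℕ, ∀ s, t s = T s - L := ⟨_, fun s => rfl⟩
  have htL : ∀ s, t s + L = T s := by
    intro s
    have := hTL s
    rw [ht]
    omega
  have htj : ∀ s, j + 2 ≤ t s := by
    intro s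
    have := hTL s
    rw [ht]
    omega
  -- 2^(t s) * q ≡ 1 mod k
  have hts : ∀ s, 2^(t s) * q ≡ 1 [MOD k] := by
    intro s
    have h1 : (2:ℕ)^(t s) * q = (2^φ)^(s + L + j + 2) := by
      rw [hqdef, ← pow_add, htL s, hT, mul_comm, pow_mul]
    rw [h1]
    calc ((2:ℕ)^φ)^(s + L + j + 2) ≡ 1^(s + L + j + 2) [MOD k] :=
          Nat.ModEq.pow _ htot
      _ = 1 := one_pow _
  -- 6j² < 4^(t s) * u0
  have hlt6 : ∀ s, 6*j^2 < 4^(t s) * u0 := by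
    intro s
    have h1 : j < 2^j := Nat.lt_two_pow_self
    have h2 : 6*j^2 < 4^(j+2) := by
      have h3 : (j+1)^2 ≤ (2^j)^2 := Nat.pow_le_pow_left (by omega) 2
      have h4 : ((2:ℕ)^j)^2 = 4^j := by
        rw [← pow_mul, mul_comm, pow_mul]
        norm_num
      have h5 : (4:ℕ)^(j+2) = 16 * 4^j := by rw [pow_add]; ring
      nlinarith
    have h6 : (4:ℕ)^(j+2) ≤ 4^(t s) := Nat.pow_le_pow_right (by norm_num) (htj s)
    have h7 : (4:ℕ)^(t s) ≤ 4^(t s) * u0 := Nat.le_mul_of_pos_right _ hu0pos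
    omega
  -- divisibility: k ∣ 4^(t s)*u0 - 6j²
  have hdvd : ∀ s, k ∣ 4^(t s) * u0 - 6*j^2 := by
    intro s
    have h1 : 4^(t s) * u0 ≡ 4^(t s) * (6*j^2*q^2) [MOD k] := hu0mod.mul_left _
    have h40 : (4:ℕ)^(t s) = 2^(t s) * 2^(t s) := by
      rw [show (4:ℕ) = 2*2 from rfl, mul_pow]
    have h2 : 4^(t s) * (6*j^2*q^2) = 6*j^2 * (2^(t s) * q)^2 := by
      rw [h40]; ring
    have h3 : 6*j^2 * (2^(t s) * q)^2 ≡ 6*j^2 * 1^2 [MOD k] :=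
      Nat.ModEq.mul_left _ (Nat.ModEq.pow _ (hts s))
    have h4 : 4^(t s) * u0 ≡ 6*j^2 [MOD k] := by
      calc 4^(t s) * u0 ≡ 4^(t s) * (6*j^2*q^2) [MOD k] := h1
        _ = 6*j^2 * (2^(t s) * q)^2 := h2
        _ ≡ 6*j^2 * 1^2 [MOD k] := h3
        _ = 6*j^2 := by ring
    exact (Nat.modEq_iff_dvd' (le_of_lt (hlt6 s))).mp h4.symm
  -- the sequence N s
  obtain ⟨N, hN⟩ : ∃ N : ℕ → ℕ, ∀ s, N s = (4^(t s) * u0 - 6*j^2) / k := ⟨_, fun s => rfl⟩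
  have hkN : ∀ s, k * N s + 6*j^2 = 4^(t s) * u0 := by
    intro s
    have h1 : k * N s = 4^(t s) * u0 - 6*j^2 := by
      rw [hN]
      exact Nat.mul_div_cancel' (hdvd s)
    have := hlt6 s
    omega
  -- strict monotonicity of t, N
  have htmono : ∀ s, t s < t (s+1) := by
    intro s
    have h1 : T s + φ = T (s+1) := by rw [hT, hT]; ring
    have h2 := hTL s
    rw [ht, ht]
    omega
  have hNmono : ∀ s, N s < N (s+1) := by
    intro s
    have h1 : (4:ℕ)^(t s) < 4^(t (s+1)) :=
      Nat.pow_lt_pow_right (by norm_num) (htmono s)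
    have h2 : 4^(t s) * u0 < 4^(t (s+1)) * u0 := (Nat.mul_lt_mul_right hu0pos).mpr h1
    have h3 := hkN s
    have h4 := hkN (s+1)
    have h5 : k * N s < k * N (s+1) := by omega
    exact Nat.lt_of_mul_lt_mul_left h5
  have hNpos : ∀ s, 0 < N s := by
    intro s
    rcases Nat.eq_zero_or_pos (N s) with h0 | h
    · exfalso
      have h1 := hkN s
      rw [h0, Nat.mul_zero, Nat.zero_add] at h1
      exact absurd h1 (Nat.ne_of_lt (hlt6 s))
    · exact h
  -- conclude
  apply Set.infinite_of_injective_forall_mem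
    (f := fun s : ℕ => N s) ((strictMono_nat_of_lt_succ hNmono).injective)
  intro s
  refine ⟨hNpos s, ?_⟩
  rintro ⟨x₁, x₂, x₃, x₄, hrep⟩
  -- cast to ℤ
  have hpoly : ∀ n : ℕ, ((k:ℤ) * n - j)^2 = k * (polygonal m n : ℤ) + j^2 := by
    intro n
    rw [hmj, hk, poly_cast]
    push_cast
    ring
  have hqdvdZ : (k:ℤ) ∣ 2^(t s) * q - 1 := by
    obtain ⟨c, hc⟩ := (hts s).dvd
    push_cast at hc
    exact ⟨-c, by linarith⟩
  have hZ : ((k:ℤ)*x₁ - j)^2 + ((k:ℤ)*x₂ - j)^2 + 2*((k:ℤ)*x₃ - j)^2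
      + 2*((k:ℤ)*x₄ - j)^2 = 4^(t s) * u0 := by
    have hcast : (N s : ℤ) = (polygonal m x₁ : ℤ) + (polygonal m x₂ : ℤ)
        + 2*(polygonal m x₃ : ℤ) + 2*(polygonal m x₄ : ℤ) := by
      exact_mod_cast hrep
    have hkNZ : (k:ℤ) * (N s : ℤ) + 6*(j:ℤ)^2 = 4^(t s) * (u0:ℤ) := by
      exact_mod_cast hkN s
    calc ((k:ℤ)*x₁ - j)^2 + ((k:ℤ)*x₂ - j)^2 + 2*((k:ℤ)*x₃ - j)^2 + 2*((k:ℤ)*x₄ - j)^2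
        = (k:ℤ) * ((polygonal m x₁ : ℤ) + (polygonal m x₂ : ℤ)
          + 2*(polygonal m x₃ : ℤ) + 2*(polygonal m x₄ : ℤ)) + 6*(j:ℤ)^2 := by
          rw [hpoly x₁, hpoly x₂, hpoly x₃, hpoly x₄]; ring
      _ = (k:ℤ) * (N s : ℤ) + 6*(j:ℤ)^2 := by rw [← hcast]
      _ = 4^(t s) * (u0:ℤ) := hkNZ
  exact aux_no_rep k j q u0 hk hj1 hqk hkq hu0lt (t s) (htj s) hqdvdZ
    (t s) 0 (Nat.zero_add _) (by have := htj s; omega)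
    ((k:ℤ)*x₁ - j) ((k:ℤ)*x₂ - j) ((k:ℤ)*x₃ - j) ((k:ℤ)*x₄ - j)
    ⟨x₁, by ring⟩ ⟨x₂, by ring⟩ ⟨x₃, by ring⟩ ⟨x₄, by ring⟩ hZ
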